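/- Let n ≥ 2 be a natural number and let edges of a rooted binary tree of depth at most log₂ n be partitioned into levels S_0, ..., S_{L-1} with L ≤ log₂ n, where the total edge length in each level is at most 1. Define the allocation B(e) = (1/L)·ℓ(e)/(∑_{e'∈S_i} ℓ(e')) for e ∈ S_i. Then ∑_e B(e) ≤ 1 and the weight ℓ(e)/B(e) of each edge is at most L, so every root-to-leaf path has weighted length at most L² ≤ (log₂ n)². -/
import Mathlib


open Real Finset

theorem stmt_9 (n L : ℕ) (hn : 2 ≤ n) (hL : 0 < L)
    (hLlog : (L : ℝ) ≤ Real.logb 2 n)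
    (E : Type*) [Fintype E] [DecidableEq E]
    (lvl : E → Fin L) (ℓ : E → ℝ) (hℓ : ∀ e, 0 < ℓ e)
    (hlevel : ∀ i : Fin L, (∑ e ∈ Finset.univ.filter (fun e => lvl e = i), ℓ e) ≤ 1)
    (B : E → ℝ)
    (hB : ∀ e, B e = (1 / L) * ℓ e / (∑ e' ∈ Finset.univ.filter (fun e' => lvl e' = lvl e), ℓ e')) :
    (∑ e, B e) ≤ 1 ∧
    (∀ e, ℓ e / B e ≤ L) ∧
    (∀ P : Finset E, P.card ≤ L → (∑ e ∈ P, ℓ e / B e) ≤ (L : ℝ) ^ 2) ∧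
    ((L : ℝ) ^ 2 ≤ (Real.logb 2 n) ^ 2) := by
  have hLR : (0:ℝ) < L := by exact_mod_cast hL
  have hS : ∀ e : E, 0 < ∑ e' ∈ Finset.univ.filter (fun e' => lvl e' = lvl e), ℓ e' := by
    intro e
    apply Finset.sum_pos (fun x _ => hℓ x)
    exact ⟨e, by simp⟩
  have hratio : ∀ e, ℓ e / B e = L * ∑ e' ∈ Finset.univ.filter (fun e' => lvl e' = lvl e), ℓ e' := by
    intro e
    rw [hB e]
    have h1 := (hℓ e).ne'
    have h2 := (hS e).ne'
    field_simp
  have hwt : ∀ e, ℓ e / B e ≤ L := by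
    intro e
    rw [hratio e]
    calc (L:ℝ) * ∑ e' ∈ Finset.univ.filter (fun e' => lvl e' = lvl e), ℓ e'
        ≤ L * 1 := mul_le_mul_of_nonneg_left (hlevel (lvl e)) hLR.le
      _ = L := mul_one _
  refine ⟨?_, hwt, ?_, ?_⟩
  · have : (∑ e, B e) = ∑ i : Fin L, ∑ e ∈ Finset.univ.filter (fun e => lvl e = i), B e := by
      rw [← Finset.sum_fiberwise (s := Finset.univ) (g := lvl) (f := B)]
    rw [this]
    calc ∑ i : Fin L, ∑ e ∈ Finset.univ.filter (fun e => lvl e = i), B e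
        ≤ ∑ i : Fin L, (1/L : ℝ) := by
          apply Finset.sum_le_sum
          intro i _
          by_cases hne : (Finset.univ.filter (fun e => lvl e = i)).Nonempty
          · have hSi : (0:ℝ) < ∑ e' ∈ Finset.univ.filter (fun e' => lvl e' = i), ℓ e' :=
              Finset.sum_pos (fun x _ => hℓ x) hne
            have : ∑ e ∈ Finset.univ.filter (fun e => lvl e = i), B e
                = (1/L : ℝ) * (∑ e ∈ Finset.univ.filter (fun e => lvl e = i), ℓ e)
                  / (∑ e' ∈ Finset.univ.filter (fun e' => lvl e' = i), ℓ e') := by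
              rw [mul_div_assoc, Finset.sum_div, Finset.mul_sum]
              apply Finset.sum_congr rfl
              intro e he
              simp only [Finset.mem_filter] at he
              rw [hB e, he.2]
              ring
            rw [this, mul_div_assoc, div_self hSi.ne', mul_one]
          · rw [Finset.not_nonempty_iff_eq_empty] at hne
            rw [hne, Finset.sum_empty]
            positivity
      _ = 1 := by
          rw [Finset.sum_const, Finset.card_univ, Fintype.card_fin, nsmul_eq_mul]
          field_simp
  · intro P hP
    calc (∑ e ∈ P, ℓ e / B e) ≤ ∑ e ∈ P, (L:ℝ) := Finset.sum_le_sum (fun e _ => hwt e)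
      _ = P.card * L := by rw [Finset.sum_const, nsmul_eq_mul]
      _ ≤ L * L := by
          apply mul_le_mul_of_nonneg_right _ hLR.le
          exact_mod_cast hP
      _ = (L:ℝ)^2 := (sq (L:ℝ)).symm
  · exact pow_le_pow_left₀ hLR.le hLlog 2
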